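/- Let B be a PSIT, 𝒟 a class of processes that is stable under stopping and stable under localization, X ∈ 𝒟^B with FCS (T_n, X^{(n)}), and S a stopping time on B. Then the stopped process X^S belongs to 𝒟, and (T_n, (X^{(n)})^S) is an FCS in 𝒟 for the restriction X^S𝔍_B ∈ 𝒟^B. -/

import Mathlib

/-!
Common framework: stochastic processes on predictable sets of interval type (PSITs),
following Yue–Wang–Huang, "Stochastic Integrals on Predictable Sets of Interval Type
with Financial Applications".

Time index: `ℝ≥0`.  Stopping times take values in `ℝ≥0∞`.
A process is a map `Ω → ℝ≥0 → ℝ`.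
-/

open MeasureTheory Set Filter Function
open scoped NNReal ENNReal Topology

noncomputable section

attribute [local instance] Classical.propDecidable

variable {Ω : Type*} [m : MeasurableSpace Ω]

/-- A stopping time with values in `[0,∞]` relative to the filtration `ℱ`:
`{T ≤ t} ∈ ℱ t` for every `t`. -/
def IsStopping (ℱ : Filtration ℝ≥0 m) (T : Ω → ℝ≥0∞) : Prop :=
  ∀ t : ℝ≥0, MeasurableSet[ℱ t] {ω | T ω ≤ (t : ℝ≥0∞)}

/-- The process `X` stopped at the (possibly infinite) random time `T`:
`X^T (ω, t) = X (ω, T ω ⊓ t)`. -/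
def stopped (X : Ω → ℝ≥0 → ℝ) (T : Ω → ℝ≥0∞) : Ω → ℝ≥0 → ℝ :=
  fun ω t => X ω (min (T ω) (t : ℝ≥0∞)).toNNReal

/-- An increasing sequence of stopping times with `T n ↑ ∞`. -/
def LocSeq (ℱ : Filtration ℝ≥0 m) (T : ℕ → Ω → ℝ≥0∞) : Prop :=
  (∀ n, IsStopping ℱ (T n)) ∧ (∀ ω, Monotone fun n => T n ω) ∧ ∀ ω, (⨆ n, T n ω) = ∞

/-- The usual conditions: the filtration is right-continuous and `ℱ 0` contains
all `ℙ`-null sets. -/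
def UsualConditions (ℙ : Measure Ω) (ℱ : Filtration ℝ≥0 m) : Prop :=
  (∀ t : ℝ≥0, (ℱ t : MeasurableSpace Ω) = ⨅ (s : ℝ≥0) (_ : t < s), (ℱ s : MeasurableSpace Ω)) ∧
    ∀ s : Set Ω, ℙ s = 0 → MeasurableSet[ℱ 0] s

/-- The predictable σ-field on `Ω × ℝ≥0`, generated by the sets `F × {0}` with
`F ∈ ℱ 0` and `F × (s, t]` with `F ∈ ℱ s`. -/
def predictableSigma (ℱ : Filtration ℝ≥0 m) : MeasurableSpace (Ω × ℝ≥0) :=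
  MeasurableSpace.generateFrom
    ({A | ∃ F : Set Ω, MeasurableSet[ℱ 0] F ∧ A = F ×ˢ ({0} : Set ℝ≥0)} ∪
      {A | ∃ (s t : ℝ≥0) (F : Set Ω), s < t ∧ MeasurableSet[ℱ s] F ∧ A = F ×ˢ Ioc s t})

/-- The class `𝒫` of predictable processes. -/
def classP (ℱ : Filtration ℝ≥0 m) : Set (Ω → ℝ≥0 → ℝ) :=
  {X | Measurable[predictableSigma ℱ] fun p : Ω × ℝ≥0 => X p.1 p.2}

/-- A set of interval type: every section is nonempty and of the form
`[0, T ω)` or `[0, T ω]`. -/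
def IsIntervalType (B : Set (Ω × ℝ≥0)) : Prop :=
  ∀ ω : Ω, {t : ℝ≥0 | (ω, t) ∈ B}.Nonempty ∧
    ∃ T : ℝ≥0∞, {t : ℝ≥0 | (ω, t) ∈ B} = {t : ℝ≥0 | (t : ℝ≥0∞) < T} ∨
      {t : ℝ≥0 | (ω, t) ∈ B} = {t : ℝ≥0 | (t : ℝ≥0∞) ≤ T}

/-- A predictable set of interval type (PSIT). -/
def IsPSIT (ℱ : Filtration ℝ≥0 m) (B : Set (Ω × ℝ≥0)) : Prop :=
  IsIntervalType B ∧ MeasurableSet[predictableSigma ℱ] B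

/-- The debut of the complement of `B`. -/
def debut (B : Set (Ω × ℝ≥0)) (ω : Ω) : ℝ≥0∞ :=
  ⨅ (t : ℝ≥0) (_ : (ω, t) ∉ B), (t : ℝ≥0∞)

/-- The stochastic interval `[0, T]`. -/
def Icc0 (T : Ω → ℝ≥0∞) : Set (Ω × ℝ≥0) :=
  {p : Ω × ℝ≥0 | (p.2 : ℝ≥0∞) ≤ T p.1}

/-- The extension `X·1_B` of a function on `B` by `0` off `B`. -/
def extend0 (B : Set (Ω × ℝ≥0)) (X : Ω → ℝ≥0 → ℝ) : Ω → ℝ≥0 → ℝ :=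
  fun ω t => if (ω, t) ∈ B then X ω t else 0

/-- A process: a family of random variables indexed by `ℝ≥0`. -/
def IsProcess (X : Ω → ℝ≥0 → ℝ) : Prop :=
  ∀ t : ℝ≥0, Measurable fun ω => X ω t

/-- A process on `B` : the extension by `0` off `B` is a process. -/
def IsProcessOn (B : Set (Ω × ℝ≥0)) (X : Ω → ℝ≥0 → ℝ) : Prop :=
  IsProcess (extend0 B X)

/-- Coupled sequence `(T n, Y n)` for the process `X` on `B`: the `T n` are increasing
stopping times with `T n ↑ debut B`, `⋃ n [0, T n] ⊇ B`, and `X = Y n` on `B ∩ [0, T n]`. -/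
structure IsCS (ℱ : Filtration ℝ≥0 m) (B : Set (Ω × ℝ≥0)) (X : Ω → ℝ≥0 → ℝ)
    (T : ℕ → Ω → ℝ≥0∞) (Y : ℕ → Ω → ℝ≥0 → ℝ) : Prop where
  stopping : ∀ n, IsStopping ℱ (T n)
  mono : ∀ ω, Monotone fun n => T n ω
  sup_eq : ∀ ω, (⨆ n, T n ω) = debut B ω
  covers : B ⊆ ⋃ n, Icc0 (T n)
  agrees : ∀ (n : ℕ) (ω : Ω) (t : ℝ≥0), (ω, t) ∈ B → (t : ℝ≥0∞) ≤ T n ω → X ω t = Y n ω t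

/-- `X ∈ 𝒟^B` : `X` admits a coupled sequence all of whose members lie in `𝒟`
(a fundamental coupled sequence, FCS). -/
def MemOn (ℱ : Filtration ℝ≥0 m) (𝒟 : Set (Ω → ℝ≥0 → ℝ)) (B : Set (Ω × ℝ≥0))
    (X : Ω → ℝ≥0 → ℝ) : Prop :=
  ∃ T Y, IsCS ℱ B X T Y ∧ ∀ n, Y n ∈ 𝒟

/-- A stopping time on `B` : a stopping time with `[0, S] ⊆ B`. -/
def IsStoppingOn (ℱ : Filtration ℝ≥0 m) (B : Set (Ω × ℝ≥0)) (S : Ω → ℝ≥0∞) : Prop :=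
  IsStopping ℱ S ∧ Icc0 S ⊆ B

/-- A fundamental sequence (FS) for `B` : an increasing sequence of stopping times with
`B = ⋃ n [0, τ n]`. -/
def IsFS (ℱ : Filtration ℝ≥0 m) (B : Set (Ω × ℝ≥0)) (τ : ℕ → Ω → ℝ≥0∞) : Prop :=
  (∀ n, IsStopping ℱ (τ n)) ∧ (∀ ω, Monotone fun n => τ n ω) ∧ B = ⋃ n, Icc0 (τ n)

/-- Stability of a class of processes under stopping. -/
def StableUnderStopping (ℱ : Filtration ℝ≥0 m) (𝒟 : Set (Ω → ℝ≥0 → ℝ)) : Prop :=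
  ∀ X ∈ 𝒟, ∀ T : Ω → ℝ≥0∞, IsStopping ℱ T → stopped X T ∈ 𝒟

/-- The localized class `𝒟_loc`. -/
def localized (ℱ : Filtration ℝ≥0 m) (𝒟 : Set (Ω → ℝ≥0 → ℝ)) : Set (Ω → ℝ≥0 → ℝ) :=
  {X | Measurable[ℱ 0] (fun ω => X ω 0) ∧
    ∃ T : ℕ → Ω → ℝ≥0∞, LocSeq ℱ T ∧
      ∀ n, (fun ω t => stopped X (T n) ω t - X ω 0) ∈ 𝒟}

/-- Stability of a class of processes under localization: `𝒟 = 𝒟_loc`. -/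
def StableUnderLocalization (ℱ : Filtration ℝ≥0 m) (𝒟 : Set (Ω → ℝ≥0 → ℝ)) : Prop :=
  localized ℱ 𝒟 = 𝒟

/-- A càdlàg function on `ℝ≥0` : right-continuous with finite left limits. -/
def IsCadlagFn (f : ℝ≥0 → ℝ) : Prop :=
  (∀ t, ContinuousWithinAt f (Ici t) t) ∧
    ∀ t : ℝ≥0, 0 < t → ∃ l : ℝ, Tendsto f (𝓝[<] t) (𝓝 l)

/-- The class `𝔐` of jointly measurable processes. -/
def classM : Set (Ω → ℝ≥0 → ℝ) :=
  {X | Measurable fun p : Ω × ℝ≥0 => X p.1 p.2}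

/-- The class `𝔐₀` of jointly measurable processes with null initial value. -/
def classM0 : Set (Ω → ℝ≥0 → ℝ) :=
  {X | X ∈ classM ∧ ∀ ω, X ω 0 = 0}

/-- The class `ℛ` of càdlàg processes. -/
def classR : Set (Ω → ℝ≥0 → ℝ) := {X : Ω → ℝ≥0 → ℝ | ∀ ω, IsCadlagFn (X ω)}

/-- The class `𝒞` of continuous processes. -/
def classC : Set (Ω → ℝ≥0 → ℝ) := {X : Ω → ℝ≥0 → ℝ | ∀ ω, Continuous (X ω)}

/-- Finite variation on every compact interval. -/
def FiniteVarFn (f : ℝ≥0 → ℝ) : Prop := ∀ t : ℝ≥0, BoundedVariationOn f (Iic t)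

/-- The class `𝔙` of càdlàg processes with paths of finite variation on compacts. -/
def classVraw : Set (Ω → ℝ≥0 → ℝ) :=
  {X : Ω → ℝ≥0 → ℝ | ∀ ω, IsCadlagFn (X ω) ∧ FiniteVarFn (X ω)}

/-- Adaptedness to the filtration `ℱ`. -/
def IsAdapted (ℱ : Filtration ℝ≥0 m) (X : Ω → ℝ≥0 → ℝ) : Prop :=
  ∀ t : ℝ≥0, Measurable[ℱ t] fun ω => X ω t

/-- The class `𝒱` of adapted càdlàg finite-variation processes. -/
def classV (ℱ : Filtration ℝ≥0 m) : Set (Ω → ℝ≥0 → ℝ) :=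
  {X | X ∈ classVraw ∧ IsAdapted ℱ X}

/-- The class `𝒱₀`. -/
def classV0 (ℱ : Filtration ℝ≥0 m) : Set (Ω → ℝ≥0 → ℝ) :=
  {X | X ∈ classV ℱ ∧ ∀ ω, X ω 0 = 0}

/-- Uniformly integrable martingale. -/
def IsUIMartingale (ℙ : Measure Ω) (ℱ : Filtration ℝ≥0 m) (X : Ω → ℝ≥0 → ℝ) : Prop :=
  Martingale (fun t ω => X ω t) ℱ ℙ ∧ UniformIntegrable (fun t ω => X ω t) 1 ℙ

/-- The class `ℳ_loc` of local martingales: càdlàg adapted processes `X` admitting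
stopping times `T n ↑ ∞` with each `X^{T n} − X₀` a uniformly integrable martingale. -/
def classMloc (ℙ : Measure Ω) (ℱ : Filtration ℝ≥0 m) : Set (Ω → ℝ≥0 → ℝ) :=
  {X | (∀ ω, IsCadlagFn (X ω)) ∧ IsAdapted ℱ X ∧
    ∃ T : ℕ → Ω → ℝ≥0∞, LocSeq ℱ T ∧
      ∀ n, IsUIMartingale ℙ ℱ fun ω t => stopped X (T n) ω t - X ω 0}

/-- The class `ℳ_{loc,0}`. -/
def classMloc0 (ℙ : Measure Ω) (ℱ : Filtration ℝ≥0 m) : Set (Ω → ℝ≥0 → ℝ) :=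
  {X | X ∈ classMloc ℙ ℱ ∧ ∀ ω, X ω 0 = 0}

/-- The class `𝒮` of semimartingales. -/
def classS (ℙ : Measure Ω) (ℱ : Filtration ℝ≥0 m) : Set (Ω → ℝ≥0 → ℝ) :=
  {X | ∃ M ∈ classMloc ℙ ℱ, ∃ A ∈ classV0 ℱ, X = fun ω t => M ω t + A ω t}

/-- The left limit of `f` at `t`, with the convention `f(0−) = f 0`. -/
def leftLimFn (f : ℝ≥0 → ℝ) (t : ℝ≥0) : ℝ :=
  if t = 0 then f 0 else limUnder (𝓝[<] t) f

/-- The left-limit process. -/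
def leftLimProc (X : Ω → ℝ≥0 → ℝ) : Ω → ℝ≥0 → ℝ := fun ω t => leftLimFn (X ω) t

/-- The jump process `ΔX = X − X₋`. -/
def jumpProc (X : Ω → ℝ≥0 → ℝ) : Ω → ℝ≥0 → ℝ := fun ω t => X ω t - leftLimFn (X ω) t

/-- The pre-stopped process `X^{T−} = X·1_{[0,T)} + X_{T−}·1_{[T,∞)}`. -/
def stoppedPre (X : Ω → ℝ≥0 → ℝ) (T : Ω → ℝ≥0∞) : Ω → ℝ≥0 → ℝ :=
  fun ω t => if (t : ℝ≥0∞) < T ω then X ω t else leftLimFn (X ω) (T ω).toNNReal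

/-- Indistinguishability on `B`. -/
def IndistOn (ℙ : Measure Ω) (B : Set (Ω × ℝ≥0)) (X Y : Ω → ℝ≥0 → ℝ) : Prop :=
  ∀ᵐ ω ∂ℙ, ∀ t : ℝ≥0, (ω, t) ∈ B → X ω t = Y ω t

/-- A locally bounded process: stopped at suitable `T n ↑ ∞` it is bounded. -/
def LocallyBounded (ℱ : Filtration ℝ≥0 m) (X : Ω → ℝ≥0 → ℝ) : Prop :=
  ∃ T : ℕ → Ω → ℝ≥0∞, LocSeq ℱ T ∧ ∀ n, ∃ C : ℝ, ∀ ω t, |stopped X (T n) ω t| ≤ C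

/-- The positive-variation function of a path (with an atom `a 0` at time `0`). -/
def posVarFn (a : ℝ≥0 → ℝ) (t : ℝ≥0) : ℝ :=
  max (a 0) 0 + ((eVariationOn a (Iic t)).toReal + a t - a 0) / 2

/-- The negative-variation function of a path (with an atom `a 0` at time `0`). -/
def negVarFn (a : ℝ≥0 → ℝ) (t : ℝ≥0) : ℝ :=
  max (-a 0) 0 + ((eVariationOn a (Iic t)).toReal - a t + a 0) / 2

/-- `(μp, μm)` are the Jordan components of the Lebesgue–Stieltjes measure `da` of the
path `a` (including an atom of mass `a 0` at `0`), characterized on the time set `s`. -/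
def IsLSPairOn (a : ℝ≥0 → ℝ) (μp μm : Measure ℝ≥0) (s : Set ℝ≥0) : Prop :=
  ∀ t ∈ s, μp (Iic t) = ENNReal.ofReal (posVarFn a t) ∧
    μm (Iic t) = ENNReal.ofReal (negVarFn a t)

/-- Pathwise Lebesgue–Stieltjes integrability: `∫_{[0,t]} |h| |da| < ∞` for all `t ∈ s`. -/
def LSIntegrablePathOn (h a : ℝ≥0 → ℝ) (s : Set ℝ≥0) : Prop :=
  ∃ μp μm : Measure ℝ≥0, IsLSPairOn a μp μm s ∧
    ∀ t ∈ s, (∫⁻ u in Iic t, ENNReal.ofReal |h u| ∂(μp + μm)) < ∞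

/-- `L` is the pathwise Lebesgue–Stieltjes integral `t ↦ ∫_{[0,t]} h da`, for `t ∈ s`. -/
def IsLSIntegralPathOn (h a : ℝ≥0 → ℝ) (s : Set ℝ≥0) (L : ℝ≥0 → ℝ) : Prop :=
  ∃ μp μm : Measure ℝ≥0, IsLSPairOn a μp μm s ∧
    ∀ t ∈ s, (∫⁻ u in Iic t, ENNReal.ofReal |h u| ∂(μp + μm)) < ∞ ∧
      L t = (∫ u in Iic t, h u ∂μp) - ∫ u in Iic t, h u ∂μm

/-- `H` is integrable on `B` with respect to `A` :
`∫_{[0,t]} |H_s(ω)| |dA_s(ω)| < ∞` for all `(ω, t) ∈ B`.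
(With `B = univ` this is classic Lebesgue–Stieltjes integrability.) -/
def LSIntegrableOn (B : Set (Ω × ℝ≥0)) (H A : Ω → ℝ≥0 → ℝ) : Prop :=
  ∀ ω, LSIntegrablePathOn (H ω) (A ω) {t : ℝ≥0 | (ω, t) ∈ B}

/-- `G = H • A`, the Lebesgue–Stieltjes integral on `B` of `H` with respect to `A` :
`G (ω, t) = ∫_{[0,t]} H_s(ω) dA_s(ω)` for `(ω, t) ∈ B`.
(With `B = univ` this is the classic Lebesgue–Stieltjes integral `H.A`.) -/
def IsLSIntegralOn (B : Set (Ω × ℝ≥0)) (H A G : Ω → ℝ≥0 → ℝ) : Prop :=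
  ∀ ω, IsLSIntegralPathOn (H ω) (A ω) {t : ℝ≥0 | (ω, t) ∈ B} (G ω)

/-- The patched process `x₀·1_{Ω×{0}} + Σ_{n} (Y n)·1_{(T (n-1), T n]}` (with `T (-1) = 0`). -/
def patch (T : ℕ → Ω → ℝ≥0∞) (Y : ℕ → Ω → ℝ≥0 → ℝ) (x0 : Ω → ℝ) : Ω → ℝ≥0 → ℝ :=
  fun ω t =>
    if t = 0 then x0 ω
    else ∑' n : ℕ,
      if (if n = 0 then (0 : ℝ≥0∞) else T (n - 1) ω) < (t : ℝ≥0∞) ∧ (t : ℝ≥0∞) ≤ T n ω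
        then Y n ω t else 0

/-- `V` is a quadratic covariation on `B` of the local martingales `M, N` on `B` :
`V ∈ 𝒱^B`, `MN − V ∈ (ℳ_{loc,0})^B` and `ΔV = ΔM·ΔN` on `B`. -/
def IsQuadCovarOn (ℙ : Measure Ω) (ℱ : Filtration ℝ≥0 m) (B : Set (Ω × ℝ≥0))
    (M N V : Ω → ℝ≥0 → ℝ) : Prop :=
  MemOn ℱ (classV ℱ) B V ∧
    MemOn ℱ (classMloc0 ℙ ℱ) B (fun ω t => M ω t * N ω t - V ω t) ∧
    IndistOn ℙ B (jumpProc V) fun ω t => jumpProc M ω t * jumpProc N ω t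

/-- `V` is a (classic) quadratic covariation of local martingales `M, N` :
`V ∈ 𝒱`, `MN − V ∈ ℳ_{loc,0}` and `ΔV = ΔM·ΔN`. -/
def IsQuadCovar (ℙ : Measure Ω) (ℱ : Filtration ℝ≥0 m) (M N V : Ω → ℝ≥0 → ℝ) : Prop :=
  V ∈ classV ℱ ∧ (fun ω t => M ω t * N ω t - V ω t) ∈ classMloc0 ℙ ℱ ∧
    ∀ᵐ ω ∂ℙ, ∀ t : ℝ≥0, jumpProc V ω t = jumpProc M ω t * jumpProc N ω t

/-- `H ∈ 𝓛_m(M)` : there is a local martingale `L` with `[L, N] = H.[M, N]`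
for every local martingale `N`. -/
def MemLm (ℙ : Measure Ω) (ℱ : Filtration ℝ≥0 m) (H M : Ω → ℝ≥0 → ℝ) : Prop :=
  ∃ L ∈ classMloc ℙ ℱ, ∀ N ∈ classMloc ℙ ℱ, ∀ V W : Ω → ℝ≥0 → ℝ,
    IsQuadCovar ℙ ℱ M N V → IsQuadCovar ℙ ℱ L N W →
      ∀ᵐ ω ∂ℙ, IsLSIntegralPathOn (H ω) (V ω) univ (W ω)

/-- `H ∈ 𝓛_m^B(M)` : there is a local martingale `L` on `B` with `[L, N] = H • [M, N]`
for every local martingale `N` on `B`. -/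
def MemLmOn (ℙ : Measure Ω) (ℱ : Filtration ℝ≥0 m) (B : Set (Ω × ℝ≥0))
    (H M : Ω → ℝ≥0 → ℝ) : Prop :=
  ∃ L, MemOn ℱ (classMloc ℙ ℱ) B L ∧
    ∀ N, MemOn ℱ (classMloc ℙ ℱ) B N → ∀ V W : Ω → ℝ≥0 → ℝ,
      IsQuadCovarOn ℙ ℱ B M N V → IsQuadCovarOn ℙ ℱ B L N W →
        ∀ᵐ ω ∂ℙ, IsLSIntegralPathOn (H ω) (V ω) {t : ℝ≥0 | (ω, t) ∈ B} (W ω)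

private lemma min_ne_top' (a : ℝ≥0∞) (t : ℝ≥0) : min a (t : ℝ≥0∞) ≠ ∞ :=
  ne_top_of_le_ne_top ENNReal.coe_ne_top (min_le_right _ _)

private lemma coe_toNNReal_min (a : ℝ≥0∞) (t : ℝ≥0) :
    (((min a (t : ℝ≥0∞)).toNNReal : ℝ≥0) : ℝ≥0∞) = min a (t : ℝ≥0∞) :=
  ENNReal.coe_toNNReal (min_ne_top' a t)

private lemma stopped_zero' (X : Ω → ℝ≥0 → ℝ) (S : Ω → ℝ≥0∞) (ω : Ω) :
    stopped X S ω 0 = X ω 0 := by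
  simp [stopped]

private lemma zero_mem_of_intervalType {B : Set (Ω × ℝ≥0)} (hB : IsIntervalType B) (ω : Ω) :
    (ω, (0 : ℝ≥0)) ∈ B := by
  obtain ⟨⟨t0, ht0⟩, T, hT | hT⟩ := hB ω
  · have h1 : ((t0 : ℝ≥0) : ℝ≥0∞) < T := by rwa [hT] at ht0
    have h0 : ((0 : ℝ≥0) : ℝ≥0∞) < T := lt_of_le_of_lt (by simp) h1
    show (0 : ℝ≥0) ∈ {t : ℝ≥0 | (ω, t) ∈ B}
    rw [hT]; exact h0
  · have h0 : ((0 : ℝ≥0) : ℝ≥0∞) ≤ T := zero_le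
    show (0 : ℝ≥0) ∈ {t : ℝ≥0 | (ω, t) ∈ B}
    rw [hT]; exact h0

private lemma mem_sub_initial {ℱ : Filtration ℝ≥0 m} {𝒟 : Set (Ω → ℝ≥0 → ℝ)}
    (hDl : StableUnderLocalization ℱ 𝒟) {W : Ω → ℝ≥0 → ℝ} (hW : W ∈ 𝒟) :
    (fun ω t => W ω t - W ω 0) ∈ 𝒟 := by
  rw [← hDl] at hW ⊢
  obtain ⟨h0, σ, hσ, hn⟩ := hW
  refine ⟨by simp, σ, hσ, fun n => ?_⟩
  convert hn n using 2 with ω t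
  simp [stopped]

private lemma isStopping_ite {ℱ : Filtration ℝ≥0 m} {T S : Ω → ℝ≥0∞}
    (hT : IsStopping ℱ T) (hS : IsStopping ℱ S) :
    IsStopping ℱ (fun ω => if S ω ≤ T ω then ∞ else T ω) := by
  intro t
  have hset : {ω | (if S ω ≤ T ω then (∞ : ℝ≥0∞) else T ω) ≤ (t : ℝ≥0∞)} =
      (⋃ q : ℚ, ⋃ _ : 0 ≤ q ∧ (Real.toNNReal q : ℝ≥0) ≤ t,
        ({ω | T ω ≤ ((Real.toNNReal q : ℝ≥0) : ℝ≥0∞)} ∩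
          {ω | S ω ≤ ((Real.toNNReal q : ℝ≥0) : ℝ≥0∞)}ᶜ)) ∪
      ({ω | T ω ≤ (t : ℝ≥0∞)} ∩ {ω | S ω ≤ (t : ℝ≥0∞)}ᶜ) := by
    ext ω
    simp only [mem_setOf_eq, mem_union, mem_iUnion, mem_inter_iff, mem_compl_iff]
    constructor
    · intro hω
      by_cases hST : S ω ≤ T ω
      · rw [if_pos hST] at hω
        exact absurd hω (by simp)
      · rw [if_neg hST] at hω
        push_neg at hST
        by_cases hSt : S ω ≤ (t : ℝ≥0∞)
        · obtain ⟨q, hq0, hq1, hq2⟩ := ENNReal.lt_iff_exists_rat_btwn.1 hST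
          refine Or.inl ⟨q, ⟨hq0, ?_⟩, hq1.le, not_le.2 hq2⟩
          exact_mod_cast le_trans hq2.le hSt
        · exact Or.inr ⟨hω, hSt⟩
    · intro hω
      rcases hω with ⟨q, ⟨hq0, hqt⟩, hTq, hSq⟩ | ⟨hTt, hSt⟩
      · have hTS : T ω < S ω := lt_of_le_of_lt hTq (not_le.1 hSq)
        rw [if_neg (not_le.2 hTS)]
        exact le_trans hTq (by exact_mod_cast hqt)
      · have hTS : T ω < S ω := lt_of_le_of_lt hTt (not_le.1 hSt)
        rw [if_neg (not_le.2 hTS)]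
        exact hTt
  rw [hset]
  refine MeasurableSet.union
    (MeasurableSet.iUnion fun q => MeasurableSet.iUnion fun hq => ?_)
    ((hT t).inter (hS t).compl)
  exact ((ℱ.mono hq.2) _ (hT _)).inter ((ℱ.mono hq.2) _ (hS _).compl)

/-- If `𝒟` is stable under stopping and localization, `X ∈ 𝒟^B` with
FCS `(T n, Y n)` and `S` is a stopping time on `B`, then `X^S ∈ 𝒟` and
`(T n, (Y n)^S)` is an FCS in `𝒟` for `X^S 𝔍_B ∈ 𝒟^B`. -/
theorem statement4 (ℙ : Measure Ω) [IsProbabilityMeasure ℙ] (ℱ : Filtration ℝ≥0 m)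
    (hUC : UsualConditions ℙ ℱ) (B : Set (Ω × ℝ≥0)) (hB : IsPSIT ℱ B)
    (𝒟 : Set (Ω → ℝ≥0 → ℝ)) (hDs : StableUnderStopping ℱ 𝒟)
    (hDl : StableUnderLocalization ℱ 𝒟)
    (X : Ω → ℝ≥0 → ℝ) (T : ℕ → Ω → ℝ≥0∞) (Y : ℕ → Ω → ℝ≥0 → ℝ)
    (hCS : IsCS ℱ B X T Y) (hY : ∀ n, Y n ∈ 𝒟)
    (S : Ω → ℝ≥0∞) (hS : IsStoppingOn ℱ B S) :
    stopped X S ∈ 𝒟 ∧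
      IsCS ℱ B (stopped X S) T (fun n => stopped (Y n) S) ∧
      ∀ n, stopped (Y n) S ∈ 𝒟 := by
  obtain ⟨hSst, hSB⟩ := hS
  have h3 : ∀ n, stopped (Y n) S ∈ 𝒟 := fun n => hDs (Y n) (hY n) S hSst
  -- Part 2: the coupled sequence property.
  have hagree : ∀ (n : ℕ) (ω : Ω) (t : ℝ≥0), (ω, t) ∈ B → (t : ℝ≥0∞) ≤ T n ω →
      stopped X S ω t = stopped (Y n) S ω t := by
    intro n ω t htB htT
    have hcoe := coe_toNNReal_min (S ω) t
    set u := (min (S ω) (t : ℝ≥0∞)).toNNReal with hu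
    have huB : (ω, u) ∈ B := hSB (by
      show ((u : ℝ≥0) : ℝ≥0∞) ≤ S ω
      rw [hcoe]; exact min_le_left _ _)
    have huT : ((u : ℝ≥0) : ℝ≥0∞) ≤ T n ω := by
      rw [hcoe]; exact le_trans (min_le_right _ _) htT
    exact hCS.agrees n ω u huB huT
  have h2 : IsCS ℱ B (stopped X S) T (fun n => stopped (Y n) S) :=
    ⟨hCS.stopping, hCS.mono, hCS.sup_eq, hCS.covers, hagree⟩
  -- Part 1: `stopped X S ∈ 𝒟`, via localization.
  set T' : ℕ → Ω → ℝ≥0∞ := fun n ω => if S ω ≤ T n ω then ∞ else T n ω with hT'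
  have hT'st : ∀ n, IsStopping ℱ (T' n) := fun n => isStopping_ite (hCS.stopping n) hSst
  have hT'mono : ∀ ω, Monotone fun n => T' n ω := by
    intro ω n k hnk
    by_cases h : S ω ≤ T n ω
    · have h2' : S ω ≤ T k ω := le_trans h (hCS.mono ω hnk)
      simp [hT', h, h2']
    · by_cases h2' : S ω ≤ T k ω
      · simp [hT', h, h2', le_top]
      · simpa [hT', h, h2'] using hCS.mono ω hnk
  have hT'sup : ∀ ω, (⨆ n, T' n ω) = ∞ := by
    intro ω
    by_cases h : ∃ n, S ω ≤ T n ω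
    · obtain ⟨n, hn⟩ := h
      have he : T' n ω = ∞ := if_pos hn
      exact top_unique (he ▸ le_iSup (fun n => T' n ω) n)
    · push_neg at h
      by_cases hfin : S ω = ∞
      · have hall : ∀ t : ℝ≥0, (ω, t) ∈ B := fun t => hSB (by simp [Icc0, hfin])
        have hdeb : debut B ω = ∞ := by simp [debut, hall]
        have heq : (⨆ n, T' n ω) = ⨆ n, T n ω :=
          iSup_congr fun n => by simp [hT', not_le.2 (h n)]
        rw [heq, hCS.sup_eq, hdeb]
      · exfalso
        have hmem : (ω, (S ω).toNNReal) ∈ B := hSB (by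
          show (((S ω).toNNReal : ℝ≥0) : ℝ≥0∞) ≤ S ω
          rw [ENNReal.coe_toNNReal hfin])
        obtain ⟨n, hn⟩ := mem_iUnion.1 (hCS.covers hmem)
        have : S ω ≤ T n ω := by
          have := hn
          simp only [Icc0, mem_setOf_eq] at this
          rwa [ENNReal.coe_toNNReal hfin] at this
        exact absurd this (not_le.2 (h n))
  -- key pointwise identity
  have hkey : ∀ n, stopped (stopped X S) (T' n) = stopped (stopped (Y n) S) (T n) := by
    intro n
    funext ω t
    simp only [stopped]
    rw [coe_toNNReal_min (T' n ω) t, coe_toNNReal_min (T n ω) t]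
    have hmin : min (S ω) (min (T' n ω) (t : ℝ≥0∞)) =
        min (S ω) (min (T n ω) (t : ℝ≥0∞)) := by
      by_cases h : S ω ≤ T n ω
      · simp only [hT', if_pos h]
        rw [min_eq_right (le_top : ((t : ℝ≥0∞)) ≤ ⊤)]
        rw [← min_assoc, min_eq_left h]
      · simp [hT', h]
    rw [hmin]
    have hne : min (S ω) (min (T n ω) (t : ℝ≥0∞)) ≠ ∞ :=
      ne_top_of_le_ne_top (min_ne_top' (T n ω) t) (min_le_right _ _)
    set u := (min (S ω) (min (T n ω) (t : ℝ≥0∞))).toNNReal with hu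
    have hcoe : ((u : ℝ≥0) : ℝ≥0∞) = min (S ω) (min (T n ω) (t : ℝ≥0∞)) :=
      ENNReal.coe_toNNReal hne
    refine hCS.agrees n ω u (hSB ?_) ?_
    · show ((u : ℝ≥0) : ℝ≥0∞) ≤ S ω
      rw [hcoe]; exact min_le_left _ _
    · rw [hcoe]; exact le_trans (min_le_right _ _) (min_le_left _ _)
  have h1 : stopped X S ∈ 𝒟 := by
    rw [← hDl]
    refine ⟨?_, T', ⟨hT'st, hT'mono, hT'sup⟩, fun n => ?_⟩
    · have hY0 : Y 0 ∈ localized ℱ 𝒟 := by rw [hDl]; exact hY 0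
      have hproc : (fun ω => stopped X S ω 0) = fun ω => Y 0 ω 0 := by
        funext ω
        rw [stopped_zero']
        exact hCS.agrees 0 ω 0 (zero_mem_of_intervalType hB.1 ω) zero_le
      rw [hproc]
      exact hY0.1
    · have hWn : stopped (stopped (Y n) S) (T n) ∈ 𝒟 := hDs _ (h3 n) _ (hCS.stopping n)
      have hsub := mem_sub_initial hDl hWn
      have heq : (fun ω t => stopped (stopped X S) (T' n) ω t - stopped X S ω 0)
          = fun ω t => stopped (stopped (Y n) S) (T n) ω t -
              stopped (stopped (Y n) S) (T n) ω 0 := by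
        funext ω t
        rw [hkey n]
        congr 1
        rw [← hkey n]
        simp [stopped]
      rw [heq]
      exact hsub
  exact ⟨h1, h2, h3⟩

end
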